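/- arXiv:1706.06844 — 3 statements merged into one kernel-verified Lean document; each statement's English description precedes it below -/
import Mathlib

section
/- (Ruge–Stüben two-grid convergence bound.) Let A be an N×N Hermitian positive definite matrix, let D be the diagonal matrix having the same diagonal as A, let S be an N×N matrix, and let P be an N×k matrix of full rank with k < N. Suppose there exists δ > 0 such that for all x ∈ ℂ^N, ‖Sx‖²_A ≤ ‖x‖²_A − δ‖x‖²_{AD^{-1}A} (smoothing property), and there exists ξ > 0 such that for all x ∈ ℂ^N, min_{y ∈ ℂ^k} ‖x − Py‖²_D ≤ ξ‖x‖²_A (approximation property). Then ξ ≥ δ, and the two-grid iteration matrix TGM = S·[I − P(P*AP)^{-1}P*A] satisfies ‖TGM‖_A ≤ √(1 − δ/ξ). -/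
set_option maxHeartbeats 2000000


open Matrix
open scoped ComplexOrder

/-- The squared energy (semi)norm `‖x‖²_A = re(x* A x)` associated with a matrix `A`. -/
noncomputable def quad {n : Type*} [Fintype n] (A : Matrix n n ℂ) (x : n → ℂ) : ℝ :=
  (dotProduct (star x) (A.mulVec x)).re

open scoped MatrixOrder in
theorem psd_cauchy_schwarz {n : Type*} [Fintype n] [DecidableEq n] {M : Matrix n n ℂ}
    (hM : M.PosSemidef) (u w : n → ℂ) :
    ‖dotProduct (star u) (M *ᵥ w)‖ ^ 2 ≤
      (dotProduct (star u) (M *ᵥ u)).re * (dotProduct (star w) (M *ᵥ w)).re := by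
  obtain ⟨B, hBsa, -, hBB⟩ :=
    CFC.exists_sqrt_of_isSelfAdjoint_of_quasispectrumRestricts
      (A := Matrix n n ℂ) (a := M) hM.isHermitian
      (QuasispectrumRestricts.nnreal_of_nonneg hM.nonneg)
  have hBH : Bᴴ = B := hBsa
  have key : ∀ a b : n → ℂ, dotProduct (star a) (M *ᵥ b)
      = dotProduct (star (B *ᵥ a)) (B *ᵥ b) := by
    intro a b
    rw [star_mulVec, hBH, ← Matrix.dotProduct_mulVec, Matrix.mulVec_mulVec,
      hBB, Matrix.dotProduct_mulVec]
  have h2 := norm_inner_le_norm (𝕜 := ℂ)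
    (WithLp.toLp 2 (B *ᵥ u)) (WithLp.toLp 2 (B *ᵥ w))
  rw [EuclideanSpace.inner_toLp_toLp, dotProduct_comm] at h2
  rw [key u w, key u u, key w w]
  have hu : (dotProduct (star (B *ᵥ u)) (B *ᵥ u)).re
      = ‖WithLp.toLp 2 (B *ᵥ u)‖ ^ 2 := by
    rw [dotProduct_comm, ← EuclideanSpace.inner_toLp_toLp]
    exact_mod_cast inner_self_eq_norm_sq (𝕜 := ℂ) _
  have hw : (dotProduct (star (B *ᵥ w)) (B *ᵥ w)).re
      = ‖WithLp.toLp 2 (B *ᵥ w)‖ ^ 2 := by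
    rw [dotProduct_comm, ← EuclideanSpace.inner_toLp_toLp]
    exact_mod_cast inner_self_eq_norm_sq (𝕜 := ℂ) _
  rw [hu, hw, ← mul_pow]
  exact pow_le_pow_left₀ (norm_nonneg _) h2 2

theorem quad_conj {n : Type*} [Fintype n] (M C : Matrix n n ℂ) (x : n → ℂ) :
    quad (Cᴴ * M * C) x = quad M (C.mulVec x) := by
  unfold quad
  rw [star_mulVec, Matrix.mulVec_mulVec, ← Matrix.dotProduct_mulVec, Matrix.mulVec_mulVec,
    Matrix.mul_assoc]

theorem quad_nonneg {n : Type*} [Fintype n] {M : Matrix n n ℂ} (hM : M.PosSemidef)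
    (x : n → ℂ) : 0 ≤ quad M x := by
  simpa [quad, RCLike.re_to_complex] using hM.re_dotProduct_nonneg x

theorem quad_pos {n : Type*} [Fintype n] {M : Matrix n n ℂ} (hM : M.PosDef) {x : n → ℂ}
    (hx : x ≠ 0) : 0 < quad M x := by
  simpa [quad, RCLike.re_to_complex] using hM.re_dotProduct_pos hx

/-- Ruge–Stüben two-grid convergence bound: if the smoother satisfies the smoothing
property with constant `δ > 0` and the grid transfer operator `P` satisfies the
approximation property with constant `ξ > 0`, then `ξ ≥ δ` and the two-grid iteration
matrix `TGM = S(I − P(P*AP)⁻¹P*A)` satisfies `‖TGM‖_A ≤ √(1 − δ/ξ)`, i.e.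
`‖TGM x‖²_A ≤ (1 − δ/ξ)‖x‖²_A` for all `x`. -/
theorem ruge_stuben_two_grid (N k : ℕ) (hk : k < N)
    (A S : Matrix (Fin N) (Fin N) ℂ) (hA : A.PosDef)
    (P : Matrix (Fin N) (Fin k) ℂ) (hP : LinearIndependent ℂ fun j => Pᵀ j)
    (δ ξ : ℝ) (hδ : 0 < δ) (hξ : 0 < ξ)
    (hsmooth : ∀ x : Fin N → ℂ,
      quad A (S.mulVec x) ≤
        quad A x - δ * quad (A * (Matrix.diagonal fun i => A i i)⁻¹ * A) x)
    (happrox : ∀ x : Fin N → ℂ, ∃ y : Fin k → ℂ,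
      quad (Matrix.diagonal fun i => A i i) (x - P.mulVec y) ≤ ξ * quad A x) :
    δ ≤ ξ ∧
    ∀ x : Fin N → ℂ,
      quad A ((S * ((1 : Matrix (Fin N) (Fin N) ℂ) - P * (Pᴴ * A * P)⁻¹ * (Pᴴ * A))).mulVec x)
        ≤ (1 - δ / ξ) * quad A x := by
  classical
  set D : Matrix (Fin N) (Fin N) ℂ := Matrix.diagonal (fun i => A i i) with hDdef
  -- diagonal entries are positive
  have hdi : ∀ i, 0 < A i i := by
    intro i
    have hsingle : (Pi.single i 1 : Fin N → ℂ) ≠ 0 := by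
      intro h; simpa using congrFun h i
    have := hA.dotProduct_mulVec_pos hsingle
    simpa [dotProduct, Matrix.mulVec, Pi.single_apply, apply_ite,
      Finset.sum_ite_eq', Finset.sum_ite_eq] using this
  have hDpd : D.PosDef := Matrix.PosDef.diagonal hdi
  have hDinvpd : D⁻¹.PosDef := hDpd.inv
  have hDinvH : D⁻¹ᴴ = D⁻¹ := hDinvpd.1
  have hDinvD : D⁻¹ * D = 1 :=
    Matrix.nonsing_inv_mul D ((Matrix.isUnit_iff_isUnit_det D).mp hDpd.isUnit)
  -- coarse matrix B
  set B : Matrix (Fin k) (Fin k) ℂ := Pᴴ * A * P with hBdef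
  have hPinj : Function.Injective P.mulVec := Matrix.mulVec_injective_iff.mpr hP
  have hB : B.PosDef := by
    refine Matrix.PosDef.of_dotProduct_mulVec_pos (Matrix.isHermitian_conjTranspose_mul_mul P hA.1) fun y hy => ?_
    have hPy : P *ᵥ y ≠ 0 := (hPinj.ne_iff' (Matrix.mulVec_zero P)).2 hy
    have := hA.dotProduct_mulVec_pos hPy
    simpa only [hBdef, star_mulVec, Matrix.dotProduct_mulVec, Matrix.vecMul_vecMul,
      Matrix.mulVec_mulVec, Matrix.mul_assoc] using this
  have hBinv : B * B⁻¹ = 1 :=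
    Matrix.mul_nonsing_inv B ((Matrix.isUnit_iff_isUnit_det B).mp hB.isUnit)
  have hBinvB : B⁻¹ * B = 1 :=
    Matrix.nonsing_inv_mul B ((Matrix.isUnit_iff_isUnit_det B).mp hB.isUnit)
  have hBih : B⁻¹ᴴ = B⁻¹ := by
    rw [Matrix.conjTranspose_nonsing_inv, hB.1.eq]
  -- projections
  set Q : Matrix (Fin N) (Fin N) ℂ := P * B⁻¹ * (Pᴴ * A) with hQdef
  set E : Matrix (Fin N) (Fin N) ℂ := 1 - Q with hEdef
  have hPAQ : (Pᴴ * A) * Q = Pᴴ * A := by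
    rw [hQdef]
    simp only [← Matrix.mul_assoc]
    rw [show Pᴴ * A * P = B from rfl, hBinv, Matrix.one_mul]
  have hPAE : (Pᴴ * A) * E = 0 := by
    rw [hEdef, Matrix.mul_sub, Matrix.mul_one, hPAQ, sub_self]
  have hQH : Qᴴ = A * P * (B⁻¹ * Pᴴ) := by
    rw [hQdef]
    simp only [conjTranspose_mul, conjTranspose_conjTranspose, hBih, hA.1.eq, Matrix.mul_assoc]
  have hAQ : Qᴴ * A * Q = A * Q := by
    calc Qᴴ * A * Q = A * P * B⁻¹ * ((Pᴴ * A) * Q) := by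
          rw [hQH]; simp only [Matrix.mul_assoc]
      _ = A * P * B⁻¹ * (Pᴴ * A) := by rw [hPAQ]
      _ = A * Q := by rw [hQdef]; simp only [Matrix.mul_assoc]
  have hAQherm : (A * Q)ᴴ = A * Q := by
    rw [← hAQ]; exact (Matrix.isHermitian_conjTranspose_mul_mul Q hA.1)
  have hQA : Qᴴ * A = A * Q := by
    calc Qᴴ * A = Qᴴ * Aᴴ := by rw [hA.1.eq]
      _ = (A * Q)ᴴ := (conjTranspose_mul A Q).symm
      _ = A * Q := hAQherm
  have hQQ : Q * Q = Q := by
    calc Q * Q = P * B⁻¹ * ((Pᴴ * A) * Q) := by rw [hQdef]; simp only [Matrix.mul_assoc]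
      _ = Q := by rw [hPAQ, hQdef]
  have hQAQ : Qᴴ * (A * Q) = A * Q := by rw [← Matrix.mul_assoc, hAQ]
  have hsplit : Eᴴ * A * E + Qᴴ * A * Q = A := by
    rw [hEdef, hAQ]
    simp only [conjTranspose_sub, conjTranspose_one, Matrix.sub_mul, Matrix.mul_sub,
      Matrix.one_mul, Matrix.mul_one]
    rw [hQA]
    have hAQQ : A * Q * Q = A * Q := by rw [Matrix.mul_assoc, hQQ]
    rw [hAQQ]
    abel
  -- quad A (E x) ≤ quad A x
  have hquadE : ∀ x : Fin N → ℂ, quad A (E *ᵥ x) ≤ quad A x := by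
    intro x
    have h1 : quad A x = quad A (E *ᵥ x) + quad A (Q *ᵥ x) := by
      rw [← quad_conj A E x, ← quad_conj A Q x]
      unfold quad
      rw [← Complex.add_re, ← dotProduct_add, ← Matrix.add_mulVec, hsplit]
    have h2 : 0 ≤ quad A (Q *ᵥ x) := quad_nonneg hA.posSemidef _
    linarith
  -- positive semidefiniteness of A D⁻¹ A
  have hADA : (A * D⁻¹ * A).PosSemidef := by
    have := hDinvpd.posSemidef.conjTranspose_mul_mul_same A
    rwa [hA.1.eq] at this
  -- main estimate on vectors orthogonal to the coarse space
  have main : ∀ e : Fin N → ℂ, (Pᴴ * A) *ᵥ e = 0 →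
      quad A (S *ᵥ e) ≤ (1 - δ / ξ) * quad A e := by
    intro e he
    obtain ⟨y, hy⟩ := happrox e
    set w : Fin N → ℂ := e - P *ᵥ y with hwdef
    set c : ℂ := dotProduct (star e) (A *ᵥ e) with hcdef
    set u : Fin N → ℂ := D⁻¹ *ᵥ (A *ᵥ e) with hudef
    have hstarAe : star (A *ᵥ e) = star e ᵥ* A := by rw [star_mulVec, hA.1.eq]
    have hAew : dotProduct (star (A *ᵥ e)) w = c := by
      rw [hwdef, dotProduct_sub]
      have hz : dotProduct (star (A *ᵥ e)) (P *ᵥ y) = 0 := by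
        rw [Matrix.dotProduct_mulVec]
        have h0 : star ((Pᴴ * A) *ᵥ e) = star (A *ᵥ e) ᵥ* P := by
          rw [← Matrix.mulVec_mulVec, star_mulVec, conjTranspose_conjTranspose]
        rw [← h0, he, star_zero, zero_dotProduct]
      have h1 : dotProduct (star (A *ᵥ e)) e = c := by
        rw [hstarAe, ← Matrix.dotProduct_mulVec, hcdef]
      rw [hz, h1, sub_zero]
    have h1 : dotProduct (star u) (D *ᵥ w) = c := by
      rw [hudef, star_mulVec, hDinvH, Matrix.dotProduct_mulVec, Matrix.vecMul_vecMul,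
        hDinvD, Matrix.vecMul_one, hAew]
    have h2 : (dotProduct (star u) (D *ᵥ u)).re = quad (A * D⁻¹ * A) e := by
      have : dotProduct (star u) (D *ᵥ u)
          = dotProduct (star e) ((A * D⁻¹ * A) *ᵥ e) := by
        rw [hudef, star_mulVec, hDinvH, Matrix.dotProduct_mulVec, Matrix.vecMul_vecMul,
          hDinvD, Matrix.vecMul_one, hstarAe, Matrix.mulVec_mulVec, ← Matrix.dotProduct_mulVec,
          Matrix.mulVec_mulVec, Matrix.mul_assoc]
      rw [this]; rfl
    have hCS := psd_cauchy_schwarz hDpd.posSemidef u w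
    rw [h1, h2] at hCS
    have hre : c.re = quad A e := by rw [hcdef]; rfl
    have habs : quad A e ^ 2 ≤ ‖c‖ ^ 2 := by
      rw [← hre, Complex.sq_norm, Complex.normSq_apply]
      nlinarith [sq_nonneg c.im]
    have hq2 : 0 ≤ quad (A * D⁻¹ * A) e := quad_nonneg hADA _
    have hqw : 0 ≤ quad D w := quad_nonneg hDpd.posSemidef _
    have hchain : quad A e ^ 2 ≤ quad (A * D⁻¹ * A) e * (ξ * quad A e) := by
      calc quad A e ^ 2 ≤ ‖c‖ ^ 2 := habs
        _ ≤ quad (A * D⁻¹ * A) e * quad D w := hCS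
        _ ≤ quad (A * D⁻¹ * A) e * (ξ * quad A e) := by
            exact mul_le_mul_of_nonneg_left hy hq2
    have key : quad A e ≤ ξ * quad (A * D⁻¹ * A) e := by
      rcases le_or_gt (quad A e) 0 with h | h
      · exact h.trans (by positivity)
      · nlinarith
    have h3 : δ / ξ * quad A e ≤ δ * quad (A * D⁻¹ * A) e := by
      rw [div_mul_eq_mul_div, div_le_iff₀ hξ]
      nlinarith
    have h4 := hsmooth e
    have h5 : (1 - δ / ξ) * quad A e = quad A e - δ / ξ * quad A e := by ring
    rw [h5]
    linarith
  -- the iteration matrix hypothesis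
  have hEorth : ∀ x : Fin N → ℂ, (Pᴴ * A) *ᵥ (E *ᵥ x) = 0 := by
    intro x
    rw [Matrix.mulVec_mulVec, hPAE, Matrix.zero_mulVec]
  -- δ ≤ ξ
  have hdelta : δ ≤ ξ := by
    obtain ⟨x0, hx0⟩ : ∃ x0 : Fin N → ℂ, x0 ∉ LinearMap.range P.mulVecLin := by
      by_contra h
      push_neg at h
      have htop : LinearMap.range P.mulVecLin = ⊤ := by
        refine top_unique fun v _ => h v
      have h1 : Module.finrank ℂ (LinearMap.range P.mulVecLin) ≤ k := by
        refine (LinearMap.finrank_range_le _).trans_eq ?_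
        simp
      rw [htop] at h1
      simp [finrank_top] at h1
      omega
    have he0 : E *ᵥ x0 ≠ 0 := by
      intro h
      apply hx0
      have : x0 = Q *ᵥ x0 := by
        have h1 : E *ᵥ x0 = x0 - Q *ᵥ x0 := by
          rw [hEdef, Matrix.sub_mulVec, Matrix.one_mulVec]
        rw [h1] at h
        linear_combination (norm := module) h
      refine ⟨(B⁻¹ * (Pᴴ * A)) *ᵥ x0, ?_⟩
      rw [Matrix.mulVecLin_apply, Matrix.mulVec_mulVec, ← Matrix.mul_assoc, ← hQdef, ← this]
    have hpos : 0 < quad A (E *ᵥ x0) := quad_pos hA he0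
    have h1 := main (E *ᵥ x0) (hEorth x0)
    have h2 : 0 ≤ quad A (S *ᵥ (E *ᵥ x0)) := quad_nonneg hA.posSemidef _
    have h3 : 0 ≤ 1 - δ / ξ := by nlinarith
    have : δ / ξ ≤ 1 := by linarith
    calc δ = δ / ξ * ξ := by field_simp
      _ ≤ 1 * ξ := by nlinarith
      _ = ξ := one_mul ξ
  refine ⟨hdelta, fun x => ?_⟩
  have h0 : 0 ≤ 1 - δ / ξ := by
    rw [sub_nonneg]
    exact (div_le_one hξ).mpr hdelta
  have h1 : (S * E).mulVec x = S *ᵥ (E *ᵥ x) := by rw [Matrix.mulVec_mulVec]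
  calc quad A ((S * E).mulVec x) = quad A (S *ᵥ (E *ᵥ x)) := by rw [h1]
    _ ≤ (1 - δ / ξ) * quad A (E *ᵥ x) := main (E *ᵥ x) (hEorth x)
    _ ≤ (1 - δ / ξ) * quad A x := mul_le_mul_of_nonneg_left (hquadE x) h0
end

section
/- (Smoothing property of damped Jacobi for the BTTB fractional matrix.) Let α, β ∈ (1,2), d, e, ρ > 0, and let A_N = T_N^{(2)}(𝓕_{(α,β)}) be the N×N 2-level Toeplitz matrix generated by 𝓕_{(α,β)}(θ₁,θ₂) = d·q_α(θ₁) + e·ρ·q_β(θ₂), with N = n₁n₂. Let a₀ = (1/4π²)∫_{[-π,π]²}𝓕_{(α,β)} be the zero-order Fourier coefficient (equal to every diagonal entry of A_N, namely a₀ = −2(d·w₁^{(α)} + ρe·w₁^{(β)}) > 0), let D_N = a₀·I_N, and let S_N = I_N − ω·D_N^{-1}A_N. If 0 < ω < 2a₀/‖𝓕_{(α,β)}‖_∞, then there exists δ > 0, independent of N, such that for all x ∈ ℂ^N, ‖S_N x‖²_{A_N} ≤ ‖x‖²_{A_N} − δ‖x‖²_{A_N D_N^{-1} A_N}. -/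
open scoped Real Topology Kronecker ComplexOrder
open Matrix MeasureTheory

/-- Alternating fractional binomial coefficients. -/
noncomputable def gcoef (γ : ℝ) (k : ℕ) : ℝ :=
  (-1 : ℝ) ^ k / (Nat.factorial k) * ∏ i ∈ Finset.range k, (γ - i)

/-- WSGD weights. -/
noncomputable def w (γ : ℝ) : ℕ → ℝ
  | 0 => γ / 2 * gcoef γ 0
  | (k + 1) => γ / 2 * gcoef γ (k + 1) + (2 - γ) / 2 * gcoef γ k

/-- The symbol `f_γ(ξ) = -∑_{k=-1}^∞ w_{k+1}^{(γ)} e^{ikξ}`. -/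
noncomputable def fsym (γ : ℝ) (ξ : ℝ) : ℂ :=
  -∑' k : ℕ, (w γ k : ℂ) * Complex.exp (Complex.I * ((k : ℂ) - 1) * (ξ : ℂ))

/-- `𝓕_{(α,β)}(θ₁,θ₂) = d·q_α(θ₁) + e·ρ·q_β(θ₂)` where `q_γ(ξ) = f_γ(ξ) + f_γ(-ξ)`. -/
noncomputable def FC (α β d e ρ : ℝ) (θ₁ θ₂ : ℝ) : ℂ :=
  (d : ℂ) * (fsym α θ₁ + fsym α (-θ₁)) + ((e * ρ : ℝ) : ℂ) * (fsym β θ₂ + fsym β (-θ₂))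

/-- The 2-level Toeplitz (BTTB) matrix `T_N^{(2)}(F)` of partial orders `(n₁,n₂)`:
the entry in row `(i₁,i₂)`, column `(j₁,j₂)` is the Fourier coefficient of `F` of
index `(i₁−j₁, i₂−j₂)` (the second component of the Lean index runs along `θ₁`). -/
noncomputable def T2 (n₁ n₂ : ℕ) (F : ℝ → ℝ → ℂ) :
    Matrix (Fin n₂ × Fin n₁) (Fin n₂ × Fin n₁) ℂ :=
  Matrix.of fun i j =>
    (1 / (4 * (Real.pi : ℂ) ^ 2)) *
      ∫ θ₁ in (-Real.pi)..Real.pi, ∫ θ₂ in (-Real.pi)..Real.pi,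
        F θ₁ θ₂ * Complex.exp (-Complex.I *
          (((((i.2 : ℕ) : ℤ) - ((j.2 : ℕ) : ℤ) : ℤ) : ℂ) * (θ₁ : ℂ)
            + ((((i.1 : ℕ) : ℤ) - ((j.1 : ℕ) : ℤ) : ℤ) : ℂ) * (θ₂ : ℂ)))

/-- The Fourier coefficient of `𝓕_{(α,β)}` of order zero. -/
noncomputable def a0 (α β d e ρ : ℝ) : ℝ :=
  ((1 / (4 * (Real.pi : ℂ) ^ 2)) *
      ∫ θ₁ in (-Real.pi)..Real.pi, ∫ θ₂ in (-Real.pi)..Real.pi, FC α β d e ρ θ₁ θ₂).re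

/-- `‖𝓕_{(α,β)}‖_∞`, the sup norm of the symbol over `[-π,π]²`. -/
noncomputable def Fmax (α β d e ρ : ℝ) : ℝ :=
  sSup ((fun θ : ℝ × ℝ => ‖FC α β d e ρ θ.1 θ.2‖) ''
    Set.Icc ((-Real.pi, -Real.pi) : ℝ × ℝ) ((Real.pi, Real.pi) : ℝ × ℝ))

open scoped ENNReal NNReal

lemma gcoef_zero (γ : ℝ) : gcoef γ 0 = 1 := by simp [gcoef]

lemma gcoef_one (γ : ℝ) : gcoef γ 1 = -γ := by simp [gcoef]

lemma gcoef_succ (γ : ℝ) (k : ℕ) :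
    gcoef γ (k + 1) = gcoef γ k * ((k - γ) / (k + 1)) := by
  unfold gcoef
  rw [Finset.prod_range_succ, pow_succ, Nat.factorial_succ]
  push_cast
  field_simp
  ring

lemma gcoef_abs_le (γ : ℝ) (hγ : γ ∈ Set.Ioo (1:ℝ) 2) (k : ℕ) :
    |gcoef γ (k + 2)| ≤ 2 / ((k + 2) * (k + 1)) := by
  obtain ⟨h1, h2⟩ := hγ
  induction k with
  | zero =>
    have : gcoef γ 2 = -γ * ((1 - γ)/2) := by rw [show (2:ℕ) = 1 + 1 from rfl, gcoef_succ, gcoef_one]; norm_num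
    rw [this, abs_mul, abs_neg, abs_div]
    rw [abs_of_pos (by linarith), abs_of_neg (by linarith), abs_of_pos (by norm_num : (0:ℝ) < 2)]
    push_cast
    nlinarith [sq_nonneg (γ - 1)]
  | succ k ih =>
    have hrec := gcoef_succ γ (k + 2)
    rw [show k + 1 + 2 = k + 2 + 1 from rfl, hrec, abs_mul, abs_div]
    have h3 : |((k:ℝ) + 2) - γ| ≤ (k:ℝ) + 1 := by
      rw [abs_of_nonneg (by push_cast; linarith)]; push_cast; linarith
    have h4 : |((k:ℝ) + 2) + 1| = (k:ℝ) + 3 := by rw [abs_of_pos (by positivity)]; ring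
    push_cast
    push_cast at h4 ih
    rw [h4]
    calc |gcoef γ (k + 2)| * (|(k:ℝ) + 2 - γ| / ((k:ℝ) + 3))
        ≤ (2 / (((k:ℝ) + 2) * ((k:ℝ) + 1))) * (((k:ℝ) + 1) / ((k:ℝ) + 3)) := by
          apply mul_le_mul ih _ (by positivity) (by positivity)
          apply div_le_div_of_nonneg_right h3 (by positivity) |>.trans_eq rfl
      _ = 2 / (((k:ℝ) + 3) * ((k:ℝ) + 2)) := by field_simp
      _ ≤ 2 / (((k:ℝ) + 1 + 2) * ((k:ℝ) + 1 + 1)) := by apply le_of_eq; ring_nf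

lemma integral_exp_int (m : ℤ) :
    (∫ θ in (-Real.pi)..Real.pi, Complex.exp (Complex.I * m * θ)) =
      if m = 0 then 2 * (Real.pi : ℂ) else 0 := by
  rcases eq_or_ne m 0 with hm | hm
  · simp [hm, Complex.exp_zero]
    norm_num
    ring
  · rw [if_neg hm]
    have hc : Complex.I * m ≠ 0 := by
      simp [Complex.I_ne_zero, Complex.ext_iff]
      exact_mod_cast hm
    rw [integral_exp_mul_complex hc]
    have : Complex.exp (Complex.I * m * Real.pi) = Complex.exp (Complex.I * m * (-Real.pi : ℝ)) := by
      have : (Complex.I * m * Real.pi) = Complex.I * m * ((-Real.pi : ℝ)) + m * (2 * Real.pi * Complex.I) := by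
        push_cast; ring
      rw [this, Complex.exp_add, Complex.exp_int_mul_two_pi_mul_I, mul_one]
    rw [this, sub_self, zero_div]


lemma summable_abs_gcoef {γ : ℝ} (hγ : γ ∈ Set.Ioo (1:ℝ) 2) :
    Summable (fun k => |gcoef γ k|) := by
  have hg : Summable (fun k : ℕ => 2 * (1/((k:ℝ)+1)^2)) := by
    apply Summable.mul_left
    exact_mod_cast (summable_nat_add_iff 1).2 (Real.summable_one_div_nat_pow.2 one_lt_two)
  have hg2 : Summable (fun k : ℕ => 2/(((k:ℝ)+2)*((k:ℝ)+1))) := by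
    refine Summable.of_nonneg_of_le (fun k => by positivity) (fun k => ?_) hg
    rw [mul_one_div, div_le_div_iff₀ (by positivity) (by positivity)]
    nlinarith [sq_nonneg ((k:ℝ)+1)]
  have h2 : Summable (fun k : ℕ => |gcoef γ (k+2)|) := by
    refine Summable.of_nonneg_of_le (fun k => abs_nonneg _) (fun k => ?_) hg2
    exact_mod_cast gcoef_abs_le γ hγ k
  exact (summable_nat_add_iff 2).1 h2

section
variable {γ : ℝ} (hγ : γ ∈ Set.Ioo (1:ℝ) 2)
include hγ

lemma abs_w_le (k : ℕ) : |w γ k| ≤ |gcoef γ k| + |gcoef γ (k-1)| := by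
  obtain ⟨h1, h2⟩ := hγ
  match k with
  | 0 =>
    simp only [w, gcoef, Nat.zero_sub]
    simp only [pow_zero, Nat.factorial_zero, Finset.range_zero, Finset.prod_empty]
    rw [abs_of_pos (by norm_num; linarith)]
    norm_num
    linarith
  | (k+1) =>
    simp only [w, Nat.add_sub_cancel]
    calc |γ / 2 * gcoef γ (k + 1) + (2 - γ) / 2 * gcoef γ k|
        ≤ |γ / 2 * gcoef γ (k + 1)| + |(2 - γ) / 2 * gcoef γ k| := abs_add_le _ _
      _ ≤ |gcoef γ (k+1)| + |gcoef γ k| := by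
          rw [abs_mul, abs_mul, abs_of_pos (by linarith : (0:ℝ) < γ/2),
            abs_of_pos (by linarith : (0:ℝ) < (2-γ)/2)]
          have := abs_nonneg (gcoef γ (k+1))
          have := abs_nonneg (gcoef γ k)
          nlinarith

lemma summable_abs_w : Summable (fun k => |w γ k|) := by
  have h1 := summable_abs_gcoef hγ
  have h2 : Summable (fun k : ℕ => |gcoef γ (k-1)|) :=
    (summable_nat_add_iff 1).1 (by simpa using h1)
  exact Summable.of_nonneg_of_le (fun k => abs_nonneg _) (abs_w_le hγ) (h1.add h2)

omit hγ in
lemma norm_term (k : ℕ) (ξ : ℝ) :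
    ‖(w γ k : ℂ) * Complex.exp (Complex.I * ((k : ℂ) - 1) * (ξ : ℂ))‖ = |w γ k| := by
  rw [norm_mul]
  have : Complex.I * ((k : ℂ) - 1) * (ξ : ℂ) = (((k : ℝ) - 1) * ξ : ℝ) * Complex.I := by
    push_cast; ring
  rw [this, Complex.norm_exp_ofReal_mul_I, mul_one,
    Complex.norm_real, Real.norm_eq_abs]

lemma summable_term (ξ : ℝ) :
    Summable (fun k : ℕ => (w γ k : ℂ) * Complex.exp (Complex.I * ((k : ℂ) - 1) * (ξ : ℂ))) := by
  apply Summable.of_norm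
  simpa only [norm_term] using summable_abs_w hγ

lemma norm_fsym_le (ξ : ℝ) : ‖fsym γ ξ‖ ≤ ∑' k, |w γ k| := by
  rw [fsym, norm_neg]
  refine (norm_tsum_le_tsum_norm ?_).trans ?_
  · simpa only [norm_term] using summable_abs_w hγ
  · exact le_of_eq (by simp only [norm_term])

lemma continuous_fsym : Continuous (fsym γ) := by
  apply Continuous.neg
  apply continuous_tsum (u := fun k => |w γ k|)
  · intro k; fun_prop
  · exact summable_abs_w hγ
  · intro n x; exact le_of_eq (norm_term n x)

omit hγ in
lemma conj_fsym (ξ : ℝ) : (starRingEnd ℂ) (fsym γ ξ) = fsym γ (-ξ) := by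
  rw [fsym, fsym, map_neg, neg_inj, starRingEnd_apply, tsum_star]
  congr 1
  funext k
  rw [← starRingEnd_apply, _root_.map_mul, ← Complex.exp_conj, Complex.conj_ofReal]
  congr 1
  rw [_root_.map_mul, _root_.map_mul, map_sub, Complex.conj_I, _root_.map_one, Complex.conj_natCast,
    Complex.conj_ofReal]
  push_cast
  ring
end

lemma integral_term (γ : ℝ) (k : ℕ) :
    (∫ ξ in (-Real.pi)..Real.pi, (w γ k : ℂ) * Complex.exp (Complex.I * ((k : ℂ) - 1) * (ξ : ℂ)))
      = if k = 1 then 2 * (Real.pi : ℂ) * (w γ 1 : ℂ) else 0 := by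
  rw [intervalIntegral.integral_const_mul]
  have hcongr : (fun ξ : ℝ => Complex.exp (Complex.I * ((k : ℂ) - 1) * (ξ : ℂ)))
      = fun ξ : ℝ => Complex.exp (Complex.I * (((k : ℤ) - 1 : ℤ) : ℂ) * (ξ : ℂ)) := by
    funext ξ; push_cast; ring_nf
  rw [show (∫ ξ in (-Real.pi)..Real.pi, Complex.exp (Complex.I * ((k : ℂ) - 1) * (ξ : ℂ)))
      = ∫ ξ in (-Real.pi)..Real.pi, Complex.exp (Complex.I * (((k : ℤ) - 1 : ℤ) : ℂ) * (ξ : ℂ)) by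
    rw [hcongr]]
  rw [integral_exp_int ((k : ℤ) - 1)]
  rcases eq_or_ne k 1 with hk | hk
  · subst hk; simp; ring
  · rw [if_neg (by omega), if_neg hk, mul_zero]

lemma integral_fsym {γ : ℝ} (hγ : γ ∈ Set.Ioo (1:ℝ) 2) :
    (∫ ξ in (-Real.pi)..Real.pi, fsym γ ξ) = -(2 * (Real.pi : ℂ) * (w γ 1 : ℂ)) := by
  have hle : (-Real.pi : ℝ) ≤ Real.pi := by linarith [Real.pi_pos]
  have hmeas : ∀ k : ℕ, AEStronglyMeasurable
      (fun ξ : ℝ => (w γ k : ℂ) * Complex.exp (Complex.I * ((k : ℂ) - 1) * (ξ : ℂ)))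
      (volume.restrict (Set.Ioc (-Real.pi) Real.pi)) := by
    intro k
    apply Continuous.aestronglyMeasurable
    fun_prop
  have key : (∫ ξ in Set.Ioc (-Real.pi) Real.pi,
      ∑' k : ℕ, (w γ k : ℂ) * Complex.exp (Complex.I * ((k : ℂ) - 1) * (ξ : ℂ)))
      = ∑' k : ℕ, ∫ ξ in Set.Ioc (-Real.pi) Real.pi,
        (w γ k : ℂ) * Complex.exp (Complex.I * ((k : ℂ) - 1) * (ξ : ℂ)) := by
    apply integral_tsum hmeas
    have heach : ∀ k : ℕ, (∫⁻ ξ in Set.Ioc (-Real.pi) Real.pi,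
        ‖(w γ k : ℂ) * Complex.exp (Complex.I * ((k : ℂ) - 1) * (ξ : ℂ))‖ₑ)
        = ENNReal.ofReal (|w γ k| * (2 * Real.pi)) := by
      intro k
      have : ∀ ξ : ℝ, (‖(w γ k : ℂ) * Complex.exp (Complex.I * ((k : ℂ) - 1) * (ξ : ℂ))‖ₑ : ℝ≥0∞)
          = ENNReal.ofReal (|w γ k|) := by
        intro ξ
        rw [← ofReal_norm, norm_term]
      rw [lintegral_congr this, setLIntegral_const, Real.volume_Ioc,
        ← ENNReal.ofReal_mul (abs_nonneg _)]
      congr 1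
      ring
    rw [ne_eq]
    simp only [heach]
    rw [← ENNReal.ofReal_tsum_of_nonneg (fun k => by positivity)
      ((summable_abs_w hγ).mul_right _)]
    exact ENNReal.ofReal_ne_top
  calc (∫ ξ in (-Real.pi)..Real.pi, fsym γ ξ)
      = -∫ ξ in (-Real.pi)..Real.pi,
          ∑' k : ℕ, (w γ k : ℂ) * Complex.exp (Complex.I * ((k : ℂ) - 1) * (ξ : ℂ)) := by
        rw [← intervalIntegral.integral_neg]; rfl
    _ = -∑' k : ℕ, ∫ ξ in (-Real.pi)..Real.pi,
          (w γ k : ℂ) * Complex.exp (Complex.I * ((k : ℂ) - 1) * (ξ : ℂ)) := by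
        rw [intervalIntegral.integral_of_le hle, key]
        congr 1
        exact tsum_congr fun k => (intervalIntegral.integral_of_le hle).symm
    _ = -(2 * (Real.pi : ℂ) * (w γ 1 : ℂ)) := by
        congr 1
        simp only [integral_term]
        exact tsum_eq_single 1 (fun b hb => if_neg hb) |>.trans (if_pos rfl)

lemma w_one (γ : ℝ) : w γ 1 = (2 - γ - γ^2) / 2 := by
  show γ / 2 * gcoef γ 1 + (2 - γ) / 2 * gcoef γ 0 = _
  rw [gcoef_zero, gcoef_one]; ring

lemma w_one_neg {γ : ℝ} (hγ : γ ∈ Set.Ioo (1:ℝ) 2) : w γ 1 < 0 := by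
  rw [w_one]; nlinarith [hγ.1, hγ.2]

section
variable {γ : ℝ} (hγ : γ ∈ Set.Ioo (1:ℝ) 2)
include hγ

lemma continuous_q : Continuous (fun θ => fsym γ θ + fsym γ (-θ)) := by
  have := continuous_fsym hγ; fun_prop

lemma integral_q :
    (∫ θ in (-Real.pi)..Real.pi, (fsym γ θ + fsym γ (-θ)))
      = -(4 * (Real.pi : ℂ) * (w γ 1 : ℂ)) := by
  rw [intervalIntegral.integral_add]
  · rw [integral_fsym hγ]
    rw [show (∫ θ in (-Real.pi)..Real.pi, fsym γ (-θ))
        = ∫ θ in (-(Real.pi))..(- -Real.pi), fsym γ θ from intervalIntegral.integral_comp_neg _]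
    rw [neg_neg, integral_fsym hγ]
    ring
  · exact ((continuous_fsym hγ).intervalIntegrable _ _)
  · exact (((continuous_fsym hγ).comp continuous_neg).intervalIntegrable _ _)

end

lemma a0_eq (α β d e ρ : ℝ) (hα : α ∈ Set.Ioo (1:ℝ) 2) (hβ : β ∈ Set.Ioo (1:ℝ) 2) :
    a0 α β d e ρ = -2 * (d * w α 1 + ρ * e * w β 1) := by
  have hπ := Real.pi_ne_zero
  have inner : ∀ θ₁ : ℝ, (∫ θ₂ in (-Real.pi)..Real.pi, FC α β d e ρ θ₁ θ₂)
      = (2 * Real.pi : ℝ) • ((d:ℂ) * (fsym α θ₁ + fsym α (-θ₁)))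
        + ((e * ρ : ℝ) : ℂ) * (-(4 * (Real.pi : ℂ) * (w β 1 : ℂ))) := by
    intro θ₁
    rw [show (fun θ₂ => FC α β d e ρ θ₁ θ₂) = fun θ₂ =>
        ((d:ℂ) * (fsym α θ₁ + fsym α (-θ₁))
          + ((e * ρ : ℝ) : ℂ) * (fsym β θ₂ + fsym β (-θ₂))) from rfl]
    rw [intervalIntegral.integral_add (intervalIntegrable_const)
      ((show Continuous fun θ₂ : ℝ => ((e * ρ : ℝ) : ℂ) * (fsym β θ₂ + fsym β (-θ₂)) from
        continuous_const.mul (continuous_q hβ)).intervalIntegrable _ _)]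
    rw [intervalIntegral.integral_const, intervalIntegral.integral_const_mul, integral_q hβ]
    congr 2
    · norm_num; ring
  have outer : (∫ θ₁ in (-Real.pi)..Real.pi, ∫ θ₂ in (-Real.pi)..Real.pi, FC α β d e ρ θ₁ θ₂)
      = (((-8) * Real.pi^2 * (d * w α 1 + e * ρ * w β 1) : ℝ) : ℂ) := by
    rw [intervalIntegral.integral_congr (g := fun θ₁ =>
        (2 * Real.pi : ℝ) • ((d:ℂ) * (fsym α θ₁ + fsym α (-θ₁)))
        + ((e * ρ : ℝ) : ℂ) * (-(4 * (Real.pi : ℂ) * (w β 1 : ℂ))))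
        (fun θ₁ _ => inner θ₁)]
    rw [intervalIntegral.integral_add
      ((show Continuous fun θ₁ : ℝ => (2 * Real.pi : ℝ) • ((d:ℂ) * (fsym α θ₁ + fsym α (-θ₁))) from
        by have := continuous_q hα; fun_prop).intervalIntegrable _ _)
      intervalIntegrable_const]
    rw [intervalIntegral.integral_smul, intervalIntegral.integral_const_mul, integral_q hα,
      intervalIntegral.integral_const]
    push_cast
    ring_nf
    norm_num
    ring_nf
  rw [a0, outer]
  rw [show (1 / (4 * (Real.pi : ℂ) ^ 2)) = ((1 / (4 * Real.pi ^ 2) : ℝ) : ℂ) by push_cast; ring]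
  rw [← Complex.ofReal_mul, Complex.ofReal_re]
  field_simp
  ring

noncomputable def eker (m l : ℤ) (θ₁ θ₂ : ℝ) : ℂ :=
  Complex.exp (-Complex.I * ((m : ℂ) * (θ₁ : ℂ) + (l : ℂ) * (θ₂ : ℂ)))

lemma continuous_eker (m l : ℤ) : Continuous (fun θ : ℝ × ℝ => eker m l θ.1 θ.2) := by
  unfold eker
  apply Complex.continuous_exp.comp
  fun_prop

lemma T2_apply (n₁ n₂ : ℕ) (F : ℝ → ℝ → ℂ) (i j : Fin n₂ × Fin n₁) :
    T2 n₁ n₂ F i j = (1 / (4 * (Real.pi : ℂ) ^ 2)) *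
      ∫ θ₁ in (-Real.pi)..Real.pi, ∫ θ₂ in (-Real.pi)..Real.pi,
        F θ₁ θ₂ * eker (((i.2 : ℕ) : ℤ) - ((j.2 : ℕ) : ℤ))
          (((i.1 : ℕ) : ℤ) - ((j.1 : ℕ) : ℤ)) θ₁ θ₂ := rfl

lemma eker_split (m l : ℤ) (θ₁ θ₂ : ℝ) :
    eker m l θ₁ θ₂ = Complex.exp (Complex.I * ((-m : ℤ) : ℂ) * (θ₁ : ℂ))
      * Complex.exp (Complex.I * ((-l : ℤ) : ℂ) * (θ₂ : ℂ)) := by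
  rw [eker, ← Complex.exp_add]
  push_cast
  ring_nf

lemma integral_eker (m l : ℤ) :
    (∫ θ₁ in (-Real.pi)..Real.pi, ∫ θ₂ in (-Real.pi)..Real.pi, eker m l θ₁ θ₂)
      = if m = 0 ∧ l = 0 then 4 * (Real.pi : ℂ) ^ 2 else 0 := by
  have inner : ∀ θ₁ : ℝ, (∫ θ₂ in (-Real.pi)..Real.pi, eker m l θ₁ θ₂)
      = Complex.exp (Complex.I * ((-m : ℤ) : ℂ) * (θ₁ : ℂ))
        * (if (-l : ℤ) = 0 then 2 * (Real.pi : ℂ) else 0) := by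
    intro θ₁
    rw [intervalIntegral.integral_congr (g := fun θ₂ =>
      Complex.exp (Complex.I * ((-m : ℤ) : ℂ) * (θ₁ : ℂ))
        * Complex.exp (Complex.I * ((-l : ℤ) : ℂ) * (θ₂ : ℂ)))
      (fun θ₂ _ => eker_split m l θ₁ θ₂)]
    rw [intervalIntegral.integral_const_mul, integral_exp_int]
  rw [intervalIntegral.integral_congr (g := fun θ₁ =>
      Complex.exp (Complex.I * ((-m : ℤ) : ℂ) * (θ₁ : ℂ))
        * (if (-l : ℤ) = 0 then 2 * (Real.pi : ℂ) else 0)) (fun θ₁ _ => inner θ₁)]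
  rw [intervalIntegral.integral_mul_const, integral_exp_int]
  rcases eq_or_ne m 0 with hm | hm <;> rcases eq_or_ne l 0 with hl | hl
  · subst hm; subst hl; norm_num; ring
  · subst hm
    rw [if_neg (show ¬(-l = 0) by omega), mul_zero, if_neg (by tauto)]
  · subst hl
    rw [if_neg (show ¬(-m = 0) by omega), zero_mul, if_neg (by tauto)]
  · rw [if_neg (show ¬(-m = 0) by omega), zero_mul, if_neg (by tauto)]

lemma T2_one (n₁ n₂ : ℕ) : T2 n₁ n₂ (fun _ _ => (1 : ℂ)) = 1 := by
  have hπ : (Real.pi : ℂ) ≠ 0 := Complex.ofReal_ne_zero.2 Real.pi_ne_zero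
  ext i j
  rw [T2_apply]
  simp only [one_mul]
  rw [integral_eker, Matrix.one_apply]
  rcases eq_or_ne i j with hij | hij
  · subst hij
    rw [if_pos ⟨by omega, by omega⟩, if_pos rfl]
    field_simp
  · have hcond : ¬((((i.2:ℕ):ℤ) - ((j.2:ℕ):ℤ) = 0) ∧ (((i.1:ℕ):ℤ) - ((j.1:ℕ):ℤ) = 0)) := by
      rintro ⟨h1, h2⟩
      exact hij (Prod.ext (Fin.val_injective (by omega)) (Fin.val_injective (by omega)))
    rw [if_neg hcond, if_neg hij, mul_zero]

noncomputable def Pfun {n₁ n₂ : ℕ} (y : Fin n₂ × Fin n₁ → ℂ) (θ₁ θ₂ : ℝ) : ℂ :=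
  ∑ j : Fin n₂ × Fin n₁, y j *
    Complex.exp (Complex.I * (((j.2 : ℕ) : ℂ) * (θ₁ : ℂ) + ((j.1 : ℕ) : ℂ) * (θ₂ : ℂ)))

lemma continuous_Pfun {n₁ n₂ : ℕ} (y : Fin n₂ × Fin n₁ → ℂ) :
    Continuous (fun θ : ℝ × ℝ => Pfun y θ.1 θ.2) := by
  apply continuous_finset_sum
  intro j _
  exact continuous_const.mul (Complex.continuous_exp.comp (by fun_prop))

lemma quad_alg {n : Type*} [Fintype n] [DecidableEq n] (A : Matrix n n ℂ) (y : n → ℂ) :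
    star y ⬝ᵥ A *ᵥ y = ∑ p : n × n, ((starRingEnd ℂ) (y p.1) * y p.2) * A p.1 p.2 := by
  rw [← Finset.univ_product_univ, Finset.sum_product]
  simp only [dotProduct, Matrix.mulVec, Pi.star_apply, RCLike.star_def, Finset.mul_sum]
  apply Finset.sum_congr rfl
  intro i _
  apply Finset.sum_congr rfl
  intro j _
  ring

lemma pointwise_eq {n₁ n₂ : ℕ} (F : ℝ → ℝ → ℂ) (y : Fin n₂ × Fin n₁ → ℂ) (θ₁ θ₂ : ℝ) :
    F θ₁ θ₂ * ((starRingEnd ℂ) (Pfun y θ₁ θ₂) * Pfun y θ₁ θ₂)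
      = ∑ p : (Fin n₂ × Fin n₁) × (Fin n₂ × Fin n₁),
          ((starRingEnd ℂ) (y p.1) * y p.2) *
            (F θ₁ θ₂ * eker (((p.1.2 : ℕ) : ℤ) - ((p.2.2 : ℕ) : ℤ))
              (((p.1.1 : ℕ) : ℤ) - ((p.2.1 : ℕ) : ℤ)) θ₁ θ₂) := by
  rw [← Finset.univ_product_univ, Finset.sum_product]
  rw [Pfun, map_sum, Finset.sum_mul_sum, Finset.mul_sum]
  apply Finset.sum_congr rfl
  intro i _
  rw [Finset.mul_sum]
  apply Finset.sum_congr rfl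
  intro j _
  rw [_root_.map_mul, ← Complex.exp_conj]
  have harg : (starRingEnd ℂ) (Complex.I * (((i.2 : ℕ) : ℂ) * (θ₁ : ℂ) + ((i.1 : ℕ) : ℂ) * (θ₂ : ℂ)))
      = -Complex.I * (((i.2 : ℕ) : ℂ) * (θ₁ : ℂ) + ((i.1 : ℕ) : ℂ) * (θ₂ : ℂ)) := by
    rw [_root_.map_mul, map_add, _root_.map_mul, _root_.map_mul, Complex.conj_I,
      Complex.conj_natCast, Complex.conj_natCast, Complex.conj_ofReal, Complex.conj_ofReal]
    try ring
  rw [harg]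
  have hexp : Complex.exp (-Complex.I * (((i.2 : ℕ) : ℂ) * (θ₁ : ℂ) + ((i.1 : ℕ) : ℂ) * (θ₂ : ℂ)))
      * Complex.exp (Complex.I * (((j.2 : ℕ) : ℂ) * (θ₁ : ℂ) + ((j.1 : ℕ) : ℂ) * (θ₂ : ℂ)))
      = eker (((i.2 : ℕ) : ℤ) - ((j.2 : ℕ) : ℤ)) (((i.1 : ℕ) : ℤ) - ((j.1 : ℕ) : ℤ)) θ₁ θ₂ := by
    rw [eker, ← Complex.exp_add]
    congr 1
    push_cast
    try ring
  calc F θ₁ θ₂ * ((starRingEnd ℂ) (y i) *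
          Complex.exp (-Complex.I * (((i.2 : ℕ) : ℂ) * (θ₁ : ℂ) + ((i.1 : ℕ) : ℂ) * (θ₂ : ℂ)))
        * (y j * Complex.exp (Complex.I * (((j.2 : ℕ) : ℂ) * (θ₁ : ℂ) + ((j.1 : ℕ) : ℂ) * (θ₂ : ℂ)))))
      = ((starRingEnd ℂ) (y i) * y j) * (F θ₁ θ₂ *
          (Complex.exp (-Complex.I * (((i.2 : ℕ) : ℂ) * (θ₁ : ℂ) + ((i.1 : ℕ) : ℂ) * (θ₂ : ℂ)))
            * Complex.exp (Complex.I * (((j.2 : ℕ) : ℂ) * (θ₁ : ℂ) + ((j.1 : ℕ) : ℂ) * (θ₂ : ℂ))))) := by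
        ring
    _ = _ := by rw [hexp]

lemma T2_quad {n₁ n₂ : ℕ} (F : ℝ → ℝ → ℂ) (hF : Continuous (Function.uncurry F))
    (y : Fin n₂ × Fin n₁ → ℂ) :
    star y ⬝ᵥ (T2 n₁ n₂ F) *ᵥ y
      = (1 / (4 * (Real.pi : ℂ) ^ 2)) *
          ∫ θ₁ in (-Real.pi)..Real.pi, ∫ θ₂ in (-Real.pi)..Real.pi,
            F θ₁ θ₂ * ((starRingEnd ℂ) (Pfun y θ₁ θ₂) * Pfun y θ₁ θ₂) := by
  have hFc : ∀ θ₁ : ℝ, Continuous (fun θ₂ => F θ₁ θ₂) := fun θ₁ =>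
    hF.comp (Continuous.prodMk_right θ₁)
  have hcont : ∀ (p : (Fin n₂ × Fin n₁) × (Fin n₂ × Fin n₁)),
      Continuous (fun θ : ℝ × ℝ => ((starRingEnd ℂ) (y p.1) * y p.2) *
        (F θ.1 θ.2 * eker (((p.1.2 : ℕ) : ℤ) - ((p.2.2 : ℕ) : ℤ))
          (((p.1.1 : ℕ) : ℤ) - ((p.2.1 : ℕ) : ℤ)) θ.1 θ.2)) := by
    intro p
    exact continuous_const.mul (hF.mul (continuous_eker _ _))
  have inner : ∀ θ₁ : ℝ,
      (∫ θ₂ in (-Real.pi)..Real.pi, F θ₁ θ₂ * ((starRingEnd ℂ) (Pfun y θ₁ θ₂) * Pfun y θ₁ θ₂))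
      = ∑ p : (Fin n₂ × Fin n₁) × (Fin n₂ × Fin n₁),
          ((starRingEnd ℂ) (y p.1) * y p.2) *
            ∫ θ₂ in (-Real.pi)..Real.pi, F θ₁ θ₂ * eker (((p.1.2 : ℕ) : ℤ) - ((p.2.2 : ℕ) : ℤ))
              (((p.1.1 : ℕ) : ℤ) - ((p.2.1 : ℕ) : ℤ)) θ₁ θ₂ := by
    intro θ₁
    rw [intervalIntegral.integral_congr (fun θ₂ _ => pointwise_eq F y θ₁ θ₂)]
    rw [intervalIntegral.integral_finset_sum]
    · exact Finset.sum_congr rfl fun p _ => intervalIntegral.integral_const_mul _ _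
    · intro p _
      exact (((hcont p).comp (Continuous.prodMk_right θ₁)).intervalIntegrable _ _)
  rw [quad_alg, intervalIntegral.integral_congr (fun θ₁ _ => inner θ₁),
    intervalIntegral.integral_finset_sum, Finset.mul_sum]
  · apply Finset.sum_congr rfl
    intro p _
    rw [intervalIntegral.integral_const_mul, T2_apply]
    ring
  · intro p _
    apply Continuous.intervalIntegrable
    apply continuous_const.mul
    exact intervalIntegral.continuous_parametric_intervalIntegral_of_continuous'
      (f := fun θ₁ θ₂ => F θ₁ θ₂ * eker (((p.1.2 : ℕ) : ℤ) - ((p.2.2 : ℕ) : ℤ))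
        (((p.1.1 : ℕ) : ℤ) - ((p.2.1 : ℕ) : ℤ)) θ₁ θ₂)
      (by exact hF.mul (continuous_eker _ _)) _ _

lemma intervalIntegral_conj (f : ℝ → ℂ) (a b : ℝ) :
    (starRingEnd ℂ) (∫ x in a..b, f x) = ∫ x in a..b, (starRingEnd ℂ) (f x) := by
  rw [intervalIntegral.intervalIntegral_eq_integral_uIoc,
    intervalIntegral.intervalIntegral_eq_integral_uIoc, starRingEnd_apply, star_smul,
    star_trivial, ← starRingEnd_apply, ← integral_conj]

lemma intervalIntegral_re (f : ℝ → ℂ) (a b : ℝ) (hf : IntervalIntegrable f volume a b) :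
    (∫ x in a..b, f x).re = ∫ x in a..b, (f x).re :=
  (Complex.reCLM.intervalIntegral_comp_comm hf).symm

lemma conj_integrand {F : ℝ → ℝ → ℂ} (hreal : ∀ θ₁ θ₂, (starRingEnd ℂ) (F θ₁ θ₂) = F θ₁ θ₂)
    (m l : ℤ) (θ₁ θ₂ : ℝ) :
    (starRingEnd ℂ) (F θ₁ θ₂ * eker m l θ₁ θ₂) = F θ₁ θ₂ * eker (-m) (-l) θ₁ θ₂ := by
  rw [_root_.map_mul, hreal]
  congr 1
  rw [eker, eker, ← Complex.exp_conj]
  congr 1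
  rw [_root_.map_mul, map_add, _root_.map_mul, _root_.map_mul, map_neg, Complex.conj_I]
  simp only [Complex.conj_ofReal, map_intCast]
  push_cast
  ring

lemma T2_isHermitian {n₁ n₂ : ℕ} (F : ℝ → ℝ → ℂ)
    (hreal : ∀ θ₁ θ₂, (starRingEnd ℂ) (F θ₁ θ₂) = F θ₁ θ₂) :
    (T2 n₁ n₂ F).IsHermitian := by
  rw [Matrix.IsHermitian]
  ext i j
  rw [Matrix.conjTranspose_apply, T2_apply, T2_apply, RCLike.star_def, _root_.map_mul]
  congr 1
  · rw [show (1 / (4 * (Real.pi : ℂ) ^ 2)) = (((1 / (4 * Real.pi ^ 2) : ℝ)) : ℂ) by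
      push_cast; ring]
    exact Complex.conj_ofReal _
  · rw [intervalIntegral_conj]
    rw [intervalIntegral.integral_congr (g := fun θ₁ =>
      ∫ θ₂ in (-Real.pi)..Real.pi, F θ₁ θ₂
        * eker (-(((j.2 : ℕ) : ℤ) - ((i.2 : ℕ) : ℤ))) (-(((j.1 : ℕ) : ℤ) - ((i.1 : ℕ) : ℤ))) θ₁ θ₂)
      (fun θ₁ _ => by
        rw [intervalIntegral_conj]
        exact intervalIntegral.integral_congr (fun θ₂ _ => conj_integrand hreal _ _ θ₁ θ₂))]
    have h1 : -(((j.2 : ℕ) : ℤ) - ((i.2 : ℕ) : ℤ)) = ((i.2 : ℕ) : ℤ) - ((j.2 : ℕ) : ℤ) := by ring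
    have h2 : -(((j.1 : ℕ) : ℤ) - ((i.1 : ℕ) : ℤ)) = ((i.1 : ℕ) : ℤ) - ((j.1 : ℕ) : ℤ) := by ring
    rw [h1, h2]

lemma T2_quad_le {n₁ n₂ : ℕ} (F : ℝ → ℝ → ℂ) (hF : Continuous (Function.uncurry F)) (M : ℝ)
    (hbd : ∀ θ₁ θ₂ : ℝ, θ₁ ∈ Set.Icc (-Real.pi) Real.pi → θ₂ ∈ Set.Icc (-Real.pi) Real.pi →
      ‖F θ₁ θ₂‖ ≤ M)
    (y : Fin n₂ × Fin n₁ → ℂ) :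
    (star y ⬝ᵥ (T2 n₁ n₂ F) *ᵥ y).re ≤ M * (star y ⬝ᵥ y).re := by
  have hπ := Real.pi_pos
  have hπ2 : (0:ℝ) < 1 / (4 * Real.pi ^ 2) := by positivity
  have hone : Continuous (Function.uncurry (fun _ _ : ℝ => (1:ℂ))) := continuous_const
  have h1 : star y ⬝ᵥ y = star y ⬝ᵥ (T2 n₁ n₂ (fun _ _ => (1:ℂ))) *ᵥ y := by
    rw [T2_one, Matrix.one_mulVec]
  have hPc : Continuous (fun θ : ℝ × ℝ => Pfun y θ.1 θ.2) := continuous_Pfun y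
  have hNc : Continuous (fun θ : ℝ × ℝ => Complex.normSq (Pfun y θ.1 θ.2)) :=
    Complex.continuous_normSq.comp hPc
  have hcoef : (1 / (4 * (Real.pi : ℂ) ^ 2)) = (((1 / (4 * Real.pi ^ 2) : ℝ)) : ℂ) := by
    push_cast; ring
  -- re of the double integral for a continuous integrand G
  have hre : ∀ G : ℝ → ℝ → ℂ, Continuous (Function.uncurry G) →
      (∫ θ₁ in (-Real.pi)..Real.pi, ∫ θ₂ in (-Real.pi)..Real.pi, G θ₁ θ₂).re
        = ∫ θ₁ in (-Real.pi)..Real.pi, ∫ θ₂ in (-Real.pi)..Real.pi, (G θ₁ θ₂).re := by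
    intro G hG
    rw [intervalIntegral_re _ _ _
      ((intervalIntegral.continuous_parametric_intervalIntegral_of_continuous'
        (f := G) hG _ _).intervalIntegrable _ _)]
    exact intervalIntegral.integral_congr fun θ₁ _ => intervalIntegral_re _ _ _
      ((hG.comp (Continuous.prodMk_right θ₁)).intervalIntegrable _ _)
  have hpoint : ∀ θ₁ θ₂ : ℝ,
      (F θ₁ θ₂ * ((starRingEnd ℂ) (Pfun y θ₁ θ₂) * Pfun y θ₁ θ₂)).re
        = (F θ₁ θ₂).re * Complex.normSq (Pfun y θ₁ θ₂) := by
    intro θ₁ θ₂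
    rw [mul_comm ((starRingEnd ℂ) (Pfun y θ₁ θ₂)) _, Complex.mul_conj, Complex.mul_re,
      Complex.ofReal_re, Complex.ofReal_im, mul_zero, sub_zero]
  have hpoint1 : ∀ θ₁ θ₂ : ℝ,
      ((1:ℂ) * ((starRingEnd ℂ) (Pfun y θ₁ θ₂) * Pfun y θ₁ θ₂)).re
        = Complex.normSq (Pfun y θ₁ θ₂) := by
    intro θ₁ θ₂
    rw [one_mul, mul_comm, Complex.mul_conj, Complex.ofReal_re]
  have hcontFP : Continuous (Function.uncurry fun θ₁ θ₂ =>
      F θ₁ θ₂ * ((starRingEnd ℂ) (Pfun y θ₁ θ₂) * Pfun y θ₁ θ₂)) := by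
    apply hF.mul
    exact (Complex.continuous_conj.comp hPc).mul hPc
  have hcont1P : Continuous (Function.uncurry fun θ₁ θ₂ =>
      (1:ℂ) * ((starRingEnd ℂ) (Pfun y θ₁ θ₂) * Pfun y θ₁ θ₂)) := by
    apply continuous_const.mul
    exact (Complex.continuous_conj.comp hPc).mul hPc
  rw [T2_quad F hF y, h1, T2_quad (fun _ _ => (1:ℂ)) hone y, hcoef]
  rw [Complex.re_ofReal_mul, Complex.re_ofReal_mul, hre _ hcontFP, hre _ hcont1P]
  rw [intervalIntegral.integral_congr (g := fun θ₁ =>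
      ∫ θ₂ in (-Real.pi)..Real.pi, (F θ₁ θ₂).re * Complex.normSq (Pfun y θ₁ θ₂))
    (fun θ₁ _ => intervalIntegral.integral_congr fun θ₂ _ => hpoint θ₁ θ₂)]
  rw [intervalIntegral.integral_congr (g := fun θ₁ =>
      ∫ θ₂ in (-Real.pi)..Real.pi, Complex.normSq (Pfun y θ₁ θ₂))
    (fun θ₁ _ => intervalIntegral.integral_congr fun θ₂ _ => hpoint1 θ₁ θ₂)]
  rw [show M * (1 / (4 * Real.pi ^ 2) *
      ∫ θ₁ in (-Real.pi)..Real.pi, ∫ θ₂ in (-Real.pi)..Real.pi, Complex.normSq (Pfun y θ₁ θ₂))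
    = 1 / (4 * Real.pi ^ 2) *
      (M * ∫ θ₁ in (-Real.pi)..Real.pi, ∫ θ₂ in (-Real.pi)..Real.pi,
        Complex.normSq (Pfun y θ₁ θ₂)) by ring]
  apply mul_le_mul_of_nonneg_left _ hπ2.le
  have hGc : Continuous (Function.uncurry fun θ₁ θ₂ =>
      (F θ₁ θ₂).re * Complex.normSq (Pfun y θ₁ θ₂)) :=
    (Complex.continuous_re.comp hF).mul hNc
  have hab : (-Real.pi : ℝ) ≤ Real.pi := by linarith
  have inner_mono : ∀ θ₁ ∈ Set.Icc (-Real.pi) Real.pi,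
      (∫ θ₂ in (-Real.pi)..Real.pi, (F θ₁ θ₂).re * Complex.normSq (Pfun y θ₁ θ₂))
        ≤ M * ∫ θ₂ in (-Real.pi)..Real.pi, Complex.normSq (Pfun y θ₁ θ₂) := by
    intro θ₁ hθ₁
    rw [← intervalIntegral.integral_const_mul]
    apply intervalIntegral.integral_mono_on hab
      ((hGc.comp (Continuous.prodMk_right θ₁)).intervalIntegrable _ _)
      ((continuous_const.mul (hNc.comp (Continuous.prodMk_right θ₁))).intervalIntegrable _ _)
    intro θ₂ hθ₂
    apply mul_le_mul_of_nonneg_right _ (Complex.normSq_nonneg _)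
    exact (Complex.re_le_norm _).trans (hbd θ₁ θ₂ hθ₁ hθ₂)
  calc (∫ θ₁ in (-Real.pi)..Real.pi, ∫ θ₂ in (-Real.pi)..Real.pi,
        (F θ₁ θ₂).re * Complex.normSq (Pfun y θ₁ θ₂))
      ≤ ∫ θ₁ in (-Real.pi)..Real.pi,
          M * ∫ θ₂ in (-Real.pi)..Real.pi, Complex.normSq (Pfun y θ₁ θ₂) := by
        apply intervalIntegral.integral_mono_on hab
          ((intervalIntegral.continuous_parametric_intervalIntegral_of_continuous'
            (f := fun θ₁ θ₂ => (F θ₁ θ₂).re * Complex.normSq (Pfun y θ₁ θ₂)) hGc _ _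
              ).intervalIntegrable _ _)
          ((continuous_const.mul
            (intervalIntegral.continuous_parametric_intervalIntegral_of_continuous'
            (f := fun θ₁ θ₂ => Complex.normSq (Pfun y θ₁ θ₂))
              (hNc) _ _)).intervalIntegrable _ _)
          inner_mono
    _ = M * ∫ θ₁ in (-Real.pi)..Real.pi, ∫ θ₂ in (-Real.pi)..Real.pi,
          Complex.normSq (Pfun y θ₁ θ₂) := intervalIntegral.integral_const_mul _ _

section FCfacts
variable {α β : ℝ} (d e ρ : ℝ) (hα : α ∈ Set.Ioo (1:ℝ) 2) (hβ : β ∈ Set.Ioo (1:ℝ) 2)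
include hα hβ

lemma continuous_FC : Continuous (Function.uncurry (FC α β d e ρ)) := by
  have h1 := continuous_fsym hα
  have h2 := continuous_fsym hβ
  show Continuous fun p : ℝ × ℝ => (d : ℂ) * (fsym α p.1 + fsym α (-p.1))
    + ((e * ρ : ℝ) : ℂ) * (fsym β p.2 + fsym β (-p.2))
  fun_prop

omit hα hβ in
lemma conj_FC (θ₁ θ₂ : ℝ) :
    (starRingEnd ℂ) (FC α β d e ρ θ₁ θ₂) = FC α β d e ρ θ₁ θ₂ := by
  rw [FC, map_add, _root_.map_mul, _root_.map_mul, map_add, map_add, Complex.conj_ofReal,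
    Complex.conj_ofReal, conj_fsym, conj_fsym, conj_fsym, conj_fsym, neg_neg]
  ring

lemma FC_abs_le (θ₁ θ₂ : ℝ) :
    ‖FC α β d e ρ θ₁ θ₂‖
      ≤ |d| * (2 * ∑' k, |w α k|) + |e * ρ| * (2 * ∑' k, |w β k|) := by
  calc ‖FC α β d e ρ θ₁ θ₂‖
      ≤ ‖(d : ℂ) * (fsym α θ₁ + fsym α (-θ₁))‖
        + ‖((e * ρ : ℝ) : ℂ) * (fsym β θ₂ + fsym β (-θ₂))‖ := by
          rw [FC]; exact norm_add_le _ _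
    _ ≤ |d| * (2 * ∑' k, |w α k|) + |e * ρ| * (2 * ∑' k, |w β k|) := by
        apply add_le_add
        · rw [norm_mul, Complex.norm_real, Real.norm_eq_abs]
          apply mul_le_mul_of_nonneg_left _ (abs_nonneg d)
          calc ‖fsym α θ₁ + fsym α (-θ₁)‖ ≤ ‖fsym α θ₁‖ + ‖fsym α (-θ₁)‖ := norm_add_le _ _
            _ ≤ 2 * ∑' k, |w α k| := by
                have := norm_fsym_le hα θ₁; have := norm_fsym_le hα (-θ₁); linarith
        · rw [norm_mul, Complex.norm_real, Real.norm_eq_abs]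
          apply mul_le_mul_of_nonneg_left _ (abs_nonneg _)
          calc ‖fsym β θ₂ + fsym β (-θ₂)‖ ≤ ‖fsym β θ₂‖ + ‖fsym β (-θ₂)‖ := norm_add_le _ _
            _ ≤ 2 * ∑' k, |w β k| := by
                have := norm_fsym_le hβ θ₂; have := norm_fsym_le hβ (-θ₂); linarith

lemma Fmax_is_bound (θ₁ θ₂ : ℝ) (h1 : θ₁ ∈ Set.Icc (-Real.pi) Real.pi)
    (h2 : θ₂ ∈ Set.Icc (-Real.pi) Real.pi) :
    ‖FC α β d e ρ θ₁ θ₂‖ ≤ Fmax α β d e ρ := by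
  apply le_csSup
  · refine ⟨|d| * (2 * ∑' k, |w α k|) + |e * ρ| * (2 * ∑' k, |w β k|), ?_⟩
    rintro _ ⟨θ, -, rfl⟩
    exact FC_abs_le d e ρ hα hβ θ.1 θ.2
  · exact ⟨(θ₁, θ₂), Set.mem_Icc.2 ⟨⟨h1.1, h2.1⟩, ⟨h1.2, h2.2⟩⟩, rfl⟩

end FCfacts

/-- Smoothing property of damped Jacobi for `A_N = T_N^{(2)}(𝓕_{(α,β)})`: the zero-order
Fourier coefficient `a₀` equals the diagonal entries, `a₀ = −2(d·w₁^{(α)} + ρe·w₁^{(β)}) > 0`,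
and if `0 < ω < 2a₀/‖𝓕_{(α,β)}‖_∞` there is `δ > 0` independent of `N` such that
`‖S_N x‖²_{A_N} ≤ ‖x‖²_{A_N} − δ‖x‖²_{A_N D_N⁻¹ A_N}` for all `x`, where
`S_N = I − ω D_N⁻¹ A_N` and `D_N = a₀ I_N`. -/
theorem jacobi_smoothing_property (α β d e ρ ω : ℝ)
    (hα : α ∈ Set.Ioo (1 : ℝ) 2) (hβ : β ∈ Set.Ioo (1 : ℝ) 2)
    (hd : 0 < d) (he : 0 < e) (hρ : 0 < ρ)
    (hω1 : 0 < ω) (hω2 : ω < 2 * a0 α β d e ρ / Fmax α β d e ρ) :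
    0 < a0 α β d e ρ ∧
    a0 α β d e ρ = -2 * (d * w α 1 + ρ * e * w β 1) ∧
    ∃ δ : ℝ, 0 < δ ∧ ∀ n₁ n₂ : ℕ, 1 ≤ n₁ → 1 ≤ n₂ →
      ∀ x : Fin n₂ × Fin n₁ → ℂ,
        quad (T2 n₁ n₂ (FC α β d e ρ))
            (((1 : Matrix (Fin n₂ × Fin n₁) (Fin n₂ × Fin n₁) ℂ) -
              ((ω / a0 α β d e ρ : ℝ) : ℂ) • T2 n₁ n₂ (FC α β d e ρ)).mulVec x) ≤
          quad (T2 n₁ n₂ (FC α β d e ρ)) x -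
            δ * quad (T2 n₁ n₂ (FC α β d e ρ) *
                (((a0 α β d e ρ : ℝ) : ℂ) •
                  (1 : Matrix (Fin n₂ × Fin n₁) (Fin n₂ × Fin n₁) ℂ))⁻¹ *
                T2 n₁ n₂ (FC α β d e ρ)) x := by
  have haeq : a0 α β d e ρ = -2 * (d * w α 1 + ρ * e * w β 1) := a0_eq α β d e ρ hα hβ
  have ha : 0 < a0 α β d e ρ := by
    rw [haeq]
    have h1 := w_one_neg hα
    have h2 := w_one_neg hβ
    nlinarith [mul_neg_of_pos_of_neg hd h1, mul_neg_of_pos_of_neg (mul_pos hρ he) h2]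
  set a : ℝ := a0 α β d e ρ with ha_def
  set Fm : ℝ := Fmax α β d e ρ with hFm_def
  have hFm : 0 < Fm := by
    by_contra h
    push_neg at h
    have : 2 * a / Fm ≤ 0 := div_nonpos_of_nonneg_of_nonpos (by positivity) h
    linarith
  have hωF : ω * Fm < 2 * a := (lt_div_iff₀ hFm).1 hω2
  set c : ℝ := ω / a with hc_def
  set δ : ℝ := ω * (2 - ω * Fm / a) with hδ_def
  have hδ : 0 < δ := by
    apply mul_pos hω1
    have : ω * Fm / a < 2 := (div_lt_iff₀ ha).2 (by linarith)
    linarith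
  refine ⟨ha, haeq, δ, hδ, fun n₁ n₂ _ _ x => ?_⟩
  set A : Matrix (Fin n₂ × Fin n₁) (Fin n₂ × Fin n₁) ℂ := T2 n₁ n₂ (FC α β d e ρ) with hA_def
  have hA : A.IsHermitian := T2_isHermitian _ (conj_FC d e ρ)
  have hFcont : Continuous (Function.uncurry (FC α β d e ρ)) := continuous_FC d e ρ hα hβ
  set yv : Fin n₂ × Fin n₁ → ℂ := A *ᵥ x with hyv_def
  -- re (star v ⬝ᵥ v) = ∑ normSq ≥ 0
  have hself_nonneg : ∀ v : Fin n₂ × Fin n₁ → ℂ, 0 ≤ (star v ⬝ᵥ v).re := by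
    intro v
    rw [dotProduct, Complex.re_sum]
    apply Finset.sum_nonneg
    intro i _
    simp only [Pi.star_apply, RCLike.star_def]
    rw [mul_comm, Complex.mul_conj, Complex.ofReal_re]
    exact Complex.normSq_nonneg _
  have ht : 0 ≤ (star yv ⬝ᵥ yv).re := hself_nonneg yv
  have hr : (star yv ⬝ᵥ A *ᵥ yv).re ≤ Fm * (star yv ⬝ᵥ yv).re := by
    apply T2_quad_le (FC α β d e ρ) hFcont Fm _ yv
    intro θ₁ θ₂ h1 h2
    exact Fmax_is_bound d e ρ hα hβ θ₁ θ₂ h1 h2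
  have hstar' : star x ᵥ* A = star yv := by
    rw [hyv_def, Matrix.star_mulVec, hA]
  have hxAy : star x ⬝ᵥ (A *ᵥ yv) = star yv ⬝ᵥ yv := by
    rw [Matrix.dotProduct_mulVec, hstar']
  have hcC : star ((c : ℂ)) = (c : ℂ) := by
    rw [RCLike.star_def, Complex.conj_ofReal]
  -- expansion of the smoothed vector
  have hv : ((1 : Matrix (Fin n₂ × Fin n₁) (Fin n₂ × Fin n₁) ℂ) - (c : ℂ) • A) *ᵥ x
      = x - (c : ℂ) • yv := by
    rw [Matrix.sub_mulVec, Matrix.one_mulVec, Matrix.smul_mulVec]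
  have hAv : A *ᵥ (x - (c : ℂ) • yv) = yv - (c : ℂ) • (A *ᵥ yv) := by
    rw [Matrix.mulVec_sub, Matrix.mulVec_smul]
  have hstarv : star (x - (c : ℂ) • yv) = star x - (c : ℂ) • star yv := by
    rw [star_sub, star_smul, hcC]
  have hexpand : star (x - (c : ℂ) • yv) ⬝ᵥ (A *ᵥ (x - (c : ℂ) • yv))
      = star x ⬝ᵥ yv - (c : ℂ) * (star yv ⬝ᵥ yv) - (c : ℂ) * (star yv ⬝ᵥ yv)
        + (c : ℂ) * ((c : ℂ) * (star yv ⬝ᵥ A *ᵥ yv)) := by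
    rw [hAv, hstarv, sub_dotProduct, dotProduct_sub, dotProduct_sub,
      smul_dotProduct, smul_dotProduct, dotProduct_smul,
      dotProduct_smul, hxAy]
    simp only [smul_eq_mul]
    ring
  have hLHS : quad A (((1 : Matrix (Fin n₂ × Fin n₁) (Fin n₂ × Fin n₁) ℂ) - (c : ℂ) • A) *ᵥ x)
      = (star x ⬝ᵥ yv).re - 2 * c * (star yv ⬝ᵥ yv).re
        + c * (c * (star yv ⬝ᵥ A *ᵥ yv).re) := by
    rw [quad, show ((1 : Matrix (Fin n₂ × Fin n₁) (Fin n₂ × Fin n₁) ℂ) - (c : ℂ) • A).mulVec x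
      = x - (c : ℂ) • yv from hv, show A.mulVec (x - (c : ℂ) • yv) = A *ᵥ (x - (c : ℂ) • yv) from rfl,
      hexpand]
    rw [Complex.add_re, Complex.sub_re, Complex.sub_re]
    simp only [Complex.re_ofReal_mul]
    ring
  -- the matrix on the RHS
  have haC : ((a : ℝ) : ℂ) ≠ 0 := Complex.ofReal_ne_zero.2 (ne_of_gt ha)
  have hinv : (((a : ℝ) : ℂ) • (1 : Matrix (Fin n₂ × Fin n₁) (Fin n₂ × Fin n₁) ℂ))⁻¹
      = ((a⁻¹ : ℝ) : ℂ) • (1 : Matrix (Fin n₂ × Fin n₁) (Fin n₂ × Fin n₁) ℂ) := by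
    apply Matrix.inv_eq_right_inv
    rw [Matrix.smul_mul, Matrix.mul_smul, one_mul, smul_smul]
    rw [← Complex.ofReal_mul, mul_inv_cancel₀ (ne_of_gt ha), Complex.ofReal_one, one_smul]
  have hBv : (A * (((a : ℝ) : ℂ) • (1 : Matrix (Fin n₂ × Fin n₁) (Fin n₂ × Fin n₁) ℂ))⁻¹ * A) *ᵥ x
      = ((a⁻¹ : ℝ) : ℂ) • (A *ᵥ yv) := by
    rw [hinv, Matrix.mul_smul, Matrix.mul_one, Matrix.smul_mul, Matrix.smul_mulVec,
      ← Matrix.mulVec_mulVec]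
  have hRHS : quad (A * (((a : ℝ) : ℂ) • (1 : Matrix (Fin n₂ × Fin n₁) (Fin n₂ × Fin n₁) ℂ))⁻¹ * A) x
      = a⁻¹ * (star yv ⬝ᵥ yv).re := by
    rw [quad, show (A * (((a : ℝ) : ℂ) • (1 : Matrix (Fin n₂ × Fin n₁) (Fin n₂ × Fin n₁) ℂ))⁻¹ * A).mulVec x
      = ((a⁻¹ : ℝ) : ℂ) • (A *ᵥ yv) from hBv, dotProduct_smul]
    rw [smul_eq_mul, Complex.re_ofReal_mul, hxAy]
  have hq : quad A x = (star x ⬝ᵥ yv).re := rfl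
  rw [hLHS, hRHS, hq]
  have hda : δ * a⁻¹ = 2 * c - c ^ 2 * Fm := by
    rw [hδ_def, hc_def]
    field_simp
  have h2 : δ * (a⁻¹ * (star yv ⬝ᵥ yv).re) = (2 * c - c ^ 2 * Fm) * (star yv ⬝ᵥ yv).re := by
    rw [← mul_assoc, hda]
  have h3 : c ^ 2 * (star yv ⬝ᵥ A *ᵥ yv).re ≤ c ^ 2 * (Fm * (star yv ⬝ᵥ yv).re) :=
    mul_le_mul_of_nonneg_left hr (sq_nonneg c)
  nlinarith [h2, h3]
end

section
/- (Transfer of the approximation property.) Let A_N and B_N be N×N Hermitian positive definite matrices and P_N an N×k full-rank matrix, and suppose the approximation property holds for A_N: there is ξ > 0 with min_{y∈ℂ^k} ‖x − P_N y‖²_{diag(A_N)} ≤ ξ‖x‖²_{A_N} for all x ∈ ℂ^N. If there are constants ϑ, η > 0 such that A_N ≤ ϑB_N (in the Loewner order) and diag(A_N) ≥ η·diag(B_N) (entrywise on the diagonals), then the approximation property holds for B_N with the same P_N; explicitly, min_{y∈ℂ^k} ‖x − P_N y‖²_{diag(B_N)} ≤ (ξϑ/η)·‖x‖²_{B_N}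 for all x ∈ ℂ^N. -/
open Matrix
open scoped ComplexOrder

lemma quad_diagonal {n : Type*} [Fintype n] [DecidableEq n] (d : n → ℂ) (z : n → ℂ) :
    quad (Matrix.diagonal d) z = ∑ i, (d i).re * Complex.normSq (z i) := by
  unfold quad
  rw [dotProduct, Complex.re_sum]
  refine Finset.sum_congr rfl fun i _ => ?_
  rw [Matrix.mulVec_diagonal]
  have : star (z i) * (d i * z i) = d i * (Complex.normSq (z i) : ℂ) := by
    rw [show star (z i) = (starRingEnd ℂ) (z i) from rfl, mul_comm, mul_assoc,
      Complex.mul_conj]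
  rw [Pi.star_apply, this, Complex.mul_re]
  simp

/-- Transfer of the approximation property: if the approximation property holds for `A`
with constant `ξ`, `A ≤ ϑB` in the Loewner order and `diag(A) ≥ η·diag(B)`, then the
approximation property holds for `B` with the same `P` and constant `ξϑ/η`. -/
theorem approximation_property_transfer (N k : ℕ)
    (A B : Matrix (Fin N) (Fin N) ℂ) (hA : A.PosDef) (hB : B.PosDef)
    (P : Matrix (Fin N) (Fin k) ℂ) (hP : LinearIndependent ℂ fun j => Pᵀ j)
    (ξ ϑ η : ℝ) (hξ : 0 < ξ) (hϑ : 0 < ϑ) (hη : 0 < η)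
    (happrox : ∀ x : Fin N → ℂ, ∃ y : Fin k → ℂ,
      quad (Matrix.diagonal fun i => A i i) (x - P.mulVec y) ≤ ξ * quad A x)
    (hLoewner : ((ϑ : ℂ) • B - A).PosSemidef)
    (hdiag : ∀ i, η * (B i i).re ≤ (A i i).re) :
    ∀ x : Fin N → ℂ, ∃ y : Fin k → ℂ,
      quad (Matrix.diagonal fun i => B i i) (x - P.mulVec y) ≤ ξ * ϑ / η * quad B x := by
  intro x
  obtain ⟨y, hy⟩ := happrox x
  refine ⟨y, ?_⟩
  set z := x - P.mulVec y with hz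
  -- step 1: η * quad diagB z ≤ quad diagA z
  have step1 : η * quad (Matrix.diagonal fun i => B i i) z
      ≤ quad (Matrix.diagonal fun i => A i i) z := by
    rw [quad_diagonal, quad_diagonal, Finset.mul_sum]
    refine Finset.sum_le_sum fun i _ => ?_
    rw [← mul_assoc]
    exact mul_le_mul_of_nonneg_right (hdiag i) (Complex.normSq_nonneg _)
  -- step 2: quad A x ≤ ϑ * quad B x
  have step2 : quad A x ≤ ϑ * quad B x := by
    have h := (hLoewner.dotProduct_mulVec_nonneg x)
    have hre : 0 ≤ (dotProduct (star x) ((((ϑ : ℂ) • B - A)).mulVec x)).re :=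
      Complex.le_def.mp h |>.1
    have hexp : (dotProduct (star x) ((((ϑ : ℂ) • B - A)).mulVec x)).re
        = ϑ * quad B x - quad A x := by
      rw [Matrix.sub_mulVec, dotProduct_sub, Matrix.smul_mulVec,
        dotProduct_smul]
      unfold quad
      simp [smul_eq_mul, Complex.sub_re, Complex.mul_re]
    linarith [hexp ▸ hre]
  have hBx : 0 ≤ quad B x := by
    have := Complex.le_def.mp (hB.posSemidef.dotProduct_mulVec_nonneg x) |>.1
    exact this
  have : η * quad (Matrix.diagonal fun i => B i i) z ≤ ξ * ϑ * quad B x := by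
    calc η * quad (Matrix.diagonal fun i => B i i) z
        ≤ quad (Matrix.diagonal fun i => A i i) z := step1
      _ ≤ ξ * quad A x := hy
      _ ≤ ξ * (ϑ * quad B x) := mul_le_mul_of_nonneg_left step2 hξ.le
      _ = ξ * ϑ * quad B x := by ring
  rw [div_mul_eq_mul_div, le_div_iff₀ hη]
  linarith
end
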